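/- arXiv:2111.09012 — 2 statements merged into one kernel-verified Lean document; each statement's English description precedes it below -/
import Mathlib

section
/- Let ε ∈ (0,1] and let N, n be positive integers with n ≤ N. If h is a positive integer with h ≥ ln(2/√ε)·√(N/n), then n/N ≥ tanh²((1/h)·arcosh(1/√ε)), i.e. n/N ≥ 1 - sech²((1/h)·arcosh(1/√ε)). -/
noncomputable def arcosh (z : ℝ) : ℝ := Real.log (z + Real.sqrt (z ^ 2 - 1))

lemma sinh_le_mul_cosh {x : ℝ} (hx : 0 ≤ x) : Real.sinh x ≤ x * Real.cosh x := by
  have hmono : MonotoneOn (fun x : ℝ => x * Real.cosh x - Real.sinh x) (Set.Ici 0) := by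
    apply monotoneOn_of_deriv_nonneg (convex_Ici 0)
    · fun_prop
    · fun_prop
    · intro y hy
      have : deriv (fun x : ℝ => x * Real.cosh x - Real.sinh x) y = y * Real.sinh y := by
        rw [deriv_fun_sub (by fun_prop) (by fun_prop), deriv_fun_mul (by fun_prop) (by fun_prop)]
        simp [Real.deriv_cosh, Real.deriv_sinh]; try ring
      rw [this]
      have hy0 : 0 ≤ y := le_of_lt (by simpa using hy)
      exact mul_nonneg hy0 (Real.sinh_nonneg_iff.2 hy0)
  have := hmono (Set.self_mem_Ici) (Set.mem_Ici.2 hx) hx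
  simpa using this

lemma tanh_le_self {x : ℝ} (hx : 0 ≤ x) : Real.tanh x ≤ x := by
  rw [Real.tanh_eq_sinh_div_cosh, div_le_iff₀ (Real.cosh_pos x)]
  exact sinh_le_mul_cosh hx

theorem stmt_6 (ε : ℝ) (hε : ε ∈ Set.Ioc (0 : ℝ) 1) (N n : ℕ) (hn : 0 < n) (hN : 0 < N)
    (hnN : n ≤ N) (h : ℕ) (hh : 0 < h)
    (hstep : Real.log (2 / Real.sqrt ε) * Real.sqrt ((N : ℝ) / n) ≤ (h : ℝ)) :
    Real.tanh ((1 / (h : ℝ)) * arcosh (1 / Real.sqrt ε)) ^ 2 ≤ (n : ℝ) / N ∧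
    1 - (1 / Real.cosh ((1 / (h : ℝ)) * arcosh (1 / Real.sqrt ε))) ^ 2 ≤ (n : ℝ) / N := by
  obtain ⟨hε0, hε1⟩ := hε
  set z : ℝ := 1 / Real.sqrt ε with hz
  have hsε : 0 < Real.sqrt ε := Real.sqrt_pos.2 hε0
  have hsε1 : Real.sqrt ε ≤ 1 := by
    rw [show (1:ℝ) = Real.sqrt 1 by simp]; exact Real.sqrt_le_sqrt hε1
  have hz1 : 1 ≤ z := by rw [hz, le_div_iff₀ hsε]; simpa
  -- arcosh z ≤ log (2/√ε)
  have harg : z + Real.sqrt (z ^ 2 - 1) ≤ 2 / Real.sqrt ε := by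
    have h1 : Real.sqrt (z ^ 2 - 1) ≤ z := by
      rw [show z = Real.sqrt (z^2) by rw [Real.sqrt_sq (by linarith)]]
      exact Real.sqrt_le_sqrt (by rw [Real.sq_sqrt (by nlinarith : (0:ℝ) ≤ z^2)]; linarith)
    have : 2 / Real.sqrt ε = z + z := by rw [hz]; ring
    linarith
  have hargpos : 0 < z + Real.sqrt (z ^ 2 - 1) :=
    lt_of_lt_of_le one_pos (le_add_of_le_of_nonneg hz1 (Real.sqrt_nonneg _))
  have harcosh_nonneg : 0 ≤ arcosh z :=
    Real.log_nonneg (le_add_of_le_of_nonneg hz1 (Real.sqrt_nonneg _))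
  have hL : arcosh z ≤ Real.log (2 / Real.sqrt ε) :=
    Real.log_le_log hargpos harg
  -- key: x := (1/h) * arcosh z satisfies x^2 ≤ n/N
  set x : ℝ := (1 / (h : ℝ)) * arcosh z with hxdef
  have hhpos : (0:ℝ) < h := by exact_mod_cast hh
  have hx0 : 0 ≤ x := mul_nonneg (by positivity) harcosh_nonneg
  have hnpos : (0:ℝ) < n := by exact_mod_cast hn
  have hNpos : (0:ℝ) < N := by exact_mod_cast hN
  have hsNn : 0 < Real.sqrt ((N : ℝ) / n) := Real.sqrt_pos.2 (by positivity)
  have hxle : x ≤ Real.sqrt ((n : ℝ) / N) := by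
    have hLN : arcosh z * Real.sqrt ((N:ℝ)/n) ≤ (h : ℝ) := by
      calc arcosh z * Real.sqrt ((N:ℝ)/n) ≤ Real.log (2 / Real.sqrt ε) * Real.sqrt ((N:ℝ)/n) :=
            mul_le_mul_of_nonneg_right hL hsNn.le
        _ ≤ (h : ℝ) := hstep
    have hs : Real.sqrt ((n:ℝ)/N) * Real.sqrt ((N:ℝ)/n) = 1 := by
      rw [← Real.sqrt_mul (by positivity)]
      rw [show (n:ℝ)/N * ((N:ℝ)/n) = 1 by field_simp]
      simp
    rw [hxdef, div_mul_eq_mul_div, one_mul, div_le_iff₀ hhpos]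
    calc arcosh z = arcosh z * (Real.sqrt ((N:ℝ)/n) / Real.sqrt ((N:ℝ)/n)) := by
          rw [div_self hsNn.ne']; ring
      _ = (arcosh z * Real.sqrt ((N:ℝ)/n)) * (1 / Real.sqrt ((N:ℝ)/n)) := by ring
      _ ≤ (h:ℝ) * (1 / Real.sqrt ((N:ℝ)/n)) := by
          apply mul_le_mul_of_nonneg_right hLN; positivity
      _ = Real.sqrt ((n:ℝ)/N) * h := by
          rw [eq_comm, ← hs]; field_simp
  have hx2 : x ^ 2 ≤ (n : ℝ) / N := by
    calc x ^ 2 ≤ Real.sqrt ((n:ℝ)/N) ^ 2 := by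
          apply pow_le_pow_left₀ hx0 hxle
      _ = (n:ℝ)/N := Real.sq_sqrt (by positivity)
  have htanh : Real.tanh x ^ 2 ≤ (n : ℝ) / N := by
    have h1 := tanh_le_self hx0
    have h2 : 0 ≤ Real.tanh x := by
      rw [Real.tanh_eq_sinh_div_cosh]
      exact div_nonneg (Real.sinh_nonneg_iff.2 hx0) (Real.cosh_pos x).le
    calc Real.tanh x ^ 2 ≤ x ^ 2 := pow_le_pow_left₀ h2 h1 2
      _ ≤ (n:ℝ)/N := hx2
  refine ⟨htanh, ?_⟩
  have hid : 1 - (1 / Real.cosh x) ^ 2 = Real.tanh x ^ 2 := by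
    have hc := Real.cosh_pos x
    rw [Real.tanh_eq_sinh_div_cosh, div_pow, div_pow, one_pow, Real.sinh_sq]
    field_simp
  rw [hid]; exact htanh
end

section
/- Let ω ∈ ℝ, and define the 4×4 complex matrices C(α) = (entries) C₁₁ = C₄₄ = -e^{-iα}, C₂₂ = ((1-e^{-iα})(1-cos ω)/2) - 1, C₂₃ = C₃₂ = (1-e^{-iα}) sin(ω)/2, C₃₃ = ((1-e^{-iα})(1+cos ω)/2) - 1, zeros elsewhere; A(θ) as the 4×4 matrix with 1's at (1,1),(4,4), cos(ω/2) at (2,2),(3,3), -i e^{iθ} sin(ω/2) at (2,3), -i e^{-iθ} sin(ω/2) at (3,2); and R(α) = -diag(e^{-iα/2}, e^{iα/2}, e^{-iα/2}, e^{-iα/2}). Then C(α) = e^{-iα/2} A(π/2) R(α) A(-π/2) for all real α. -/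
open Matrix

/-- The parameterized coin operator restricted to the invariant 4-dimensional subspace. -/
noncomputable def Cmat (ω α : ℝ) : Matrix (Fin 4) (Fin 4) ℂ :=
  !![-Complex.exp (-Complex.I * α), 0, 0, 0;
     0, (1 - Complex.exp (-Complex.I * α)) * ((1 - Real.cos ω : ℝ) : ℂ) / 2 - 1,
       (1 - Complex.exp (-Complex.I * α)) * ((Real.sin ω : ℝ) : ℂ) / 2, 0;
     0, (1 - Complex.exp (-Complex.I * α)) * ((Real.sin ω : ℝ) : ℂ) / 2,
       (1 - Complex.exp (-Complex.I * α)) * ((1 + Real.cos ω : ℝ) : ℂ) / 2 - 1, 0;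
     0, 0, 0, -Complex.exp (-Complex.I * α)]

/-- The 4×4 unitary `A(θ)` with rotation parameter `ω`. -/
noncomputable def Amat (ω θ : ℝ) : Matrix (Fin 4) (Fin 4) ℂ :=
  !![1, 0, 0, 0;
     0, (Real.cos (ω / 2) : ℂ), -Complex.I * Complex.exp (Complex.I * θ) * (Real.sin (ω / 2) : ℂ), 0;
     0, -Complex.I * Complex.exp (-Complex.I * θ) * (Real.sin (ω / 2) : ℂ), (Real.cos (ω / 2) : ℂ), 0;
     0, 0, 0, 1]

/-- The 4×4 matrix `R(α) = -diag(e^{-iα/2}, e^{iα/2}, e^{-iα/2}, e^{-iα/2})`. -/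
noncomputable def Rmat (α : ℝ) : Matrix (Fin 4) (Fin 4) ℂ :=
  -(Matrix.diagonal ![Complex.exp (-Complex.I * α / 2), Complex.exp (Complex.I * α / 2),
      Complex.exp (-Complex.I * α / 2), Complex.exp (-Complex.I * α / 2)])

set_option maxHeartbeats 2000000 in
lemma Rmat_eq (α : ℝ) : Rmat α =
    !![-Complex.exp (-(Complex.I * α / 2)), 0, 0, 0;
       0, -Complex.exp (Complex.I * α / 2), 0, 0;
       0, 0, -Complex.exp (-(Complex.I * α / 2)), 0;
       0, 0, 0, -Complex.exp (-(Complex.I * α / 2))] := by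
  have hX := mul_inv_cancel₀ (Complex.exp_ne_zero (Complex.I * (α:ℂ) / 2))
  ext i j
  fin_cases i <;> fin_cases j <;>
    simp [Rmat, Matrix.diagonal_apply, Matrix.vecHead, Matrix.vecTail, neg_mul, neg_div]

set_option maxHeartbeats 2000000 in
theorem stmt_12 (ω α : ℝ) :
    Cmat ω α = Complex.exp (-Complex.I * α / 2) •
      (Amat ω (Real.pi / 2) * Rmat α * Amat ω (-(Real.pi / 2))) := by
  have hp : Complex.exp (Complex.I * ((Real.pi : ℂ)/2)) = Complex.I := by
    rw [mul_comm, Complex.exp_mul_I]; simp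
  have hm : Complex.exp (-(Complex.I * ((Real.pi : ℂ)/2))) = -Complex.I := by
    rw [Complex.exp_neg, hp, Complex.inv_I]
  have hE : Complex.exp (-(Complex.I * (α:ℂ) / 2)) = (Complex.exp (Complex.I * (α:ℂ) / 2))⁻¹ := by
    rw [Complex.exp_neg]
  have hG : Complex.exp (-(Complex.I * (α:ℂ))) =
      (Complex.exp (Complex.I * (α:ℂ) / 2))⁻¹ * (Complex.exp (Complex.I * (α:ℂ) / 2))⁻¹ := by
    rw [← mul_inv, ← Complex.exp_add, Complex.exp_neg]
    congr 2
    ring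
  have hc : Complex.cos (ω : ℂ) = 2 * Complex.cos ((ω : ℂ)/2)^2 - 1 := by
    rw [← Complex.cos_two_mul]; congr 1; ring
  have hs : Complex.sin (ω : ℂ) = 2 * Complex.sin ((ω : ℂ)/2) * Complex.cos ((ω : ℂ)/2) := by
    rw [show (ω : ℂ) = 2*((ω : ℂ)/2) by ring, Complex.sin_two_mul]; ring_nf
  have hsc : Complex.sin ((ω : ℂ)/2)^2 + Complex.cos ((ω : ℂ)/2)^2 = 1 :=
    Complex.sin_sq_add_cos_sq _
  have hX := mul_inv_cancel₀ (Complex.exp_ne_zero (Complex.I * (α:ℂ) / 2))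
  ext i j
  fin_cases i <;> fin_cases j <;>
    simp [Cmat, Amat, Rmat_eq, Matrix.mul_apply, Fin.sum_univ_four, hp, hm, hc, hs, hE, hG,
      neg_mul, neg_div, Matrix.vecHead, Matrix.vecTail, mul_inv_cancel₀ (Complex.exp_ne_zero _)] <;>
    first
      | ring1
      | linear_combination (Complex.exp (Complex.I * (α:ℂ) / 2))⁻¹ ^ 2 * hsc +
          Complex.cos ((ω:ℂ)/2) ^ 2 * hX
      | linear_combination hsc + Complex.sin ((ω:ℂ)/2) ^ 2 * hX
      | linear_combination (-(Complex.sin ((ω:ℂ)/2) * Complex.cos ((ω:ℂ)/2))) * hX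
end
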